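/- arXiv:1410.8802 — 4 statements merged into one kernel-verified Lean document; each statement's English description precedes it below -/
import Mathlib

section
/- Let F be a linear subspace of ℝ^d, let x, y ∈ ℝ^d be distinct points, and let z be a point on the line through x and y with ‖x - z‖ ≤ k·‖x - y‖ for some real k ≥ 1. Then dist(z, F)² ≤ 9k² · max(dist(x,F)², dist(y,F)²). -/
open Metric

theorem sq_dist_on_line_bound {d : ℕ}
    (F : Submodule ℝ (EuclideanSpace ℝ (Fin d)))
    (x y z : EuclideanSpace ℝ (Fin d)) (hxy : x ≠ y)
    (t : ℝ) (hz : z = x + t • (y - x))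
    (k : ℝ) (hk : 1 ≤ k) (hnear : ‖x - z‖ ≤ k * ‖x - y‖) :
    infDist z (F : Set (EuclideanSpace ℝ (Fin d))) ^ 2 ≤
      9 * k ^ 2 * max (infDist x (F : Set (EuclideanSpace ℝ (Fin d))) ^ 2)
        (infDist y (F : Set (EuclideanSpace ℝ (Fin d))) ^ 2) := by
  have hclosed : IsClosed (F : Set (EuclideanSpace ℝ (Fin d))) :=
    Submodule.closed_of_finiteDimensional F
  have hne : (F : Set (EuclideanSpace ℝ (Fin d))).Nonempty := ⟨0, F.zero_mem⟩
  obtain ⟨p, hpF, hp⟩ := hclosed.exists_infDist_eq_dist hne x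
  obtain ⟨q, hqF, hq⟩ := hclosed.exists_infDist_eq_dist hne y
  -- |t| ≤ k
  have hxz : ‖x - z‖ = |t| * ‖y - x‖ := by
    rw [hz]
    have : x - (x + t • (y - x)) = (-t) • (y - x) := by
      simp [smul_sub]; abel
    rw [this, norm_smul, Real.norm_eq_abs, abs_neg]
  have hyx : (0:ℝ) < ‖y - x‖ := by
    rw [norm_pos_iff, sub_ne_zero]; exact (Ne.symm hxy)
  have ht : |t| ≤ k := by
    have h2 : ‖x - y‖ = ‖y - x‖ := norm_sub_rev x y
    rw [hxz, h2] at hnear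
    exact le_of_mul_le_mul_right hnear hyx
  set M := max (infDist x (F : Set (EuclideanSpace ℝ (Fin d))))
    (infDist y (F : Set (EuclideanSpace ℝ (Fin d)))) with hM
  have hM0 : 0 ≤ M := le_trans (infDist_nonneg) (le_max_left _ _)
  have hxM : dist x p ≤ M := by rw [← hp]; exact le_max_left _ _
  have hyM : dist y q ≤ M := by rw [← hq]; exact le_max_right _ _
  -- the point on F
  have hwF : (1 - t) • p + t • q ∈ (F : Set (EuclideanSpace ℝ (Fin d))) :=
    F.add_mem (F.smul_mem _ hpF) (F.smul_mem _ hqF)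
  have hd : infDist z (F : Set (EuclideanSpace ℝ (Fin d))) ≤ 3 * k * M := by
    refine le_trans (infDist_le_dist_of_mem hwF) ?_
    have hzw : z - ((1 - t) • p + t • q) = (1 - t) • (x - p) + t • (y - q) := by
      rw [hz]; simp [smul_sub, sub_smul, one_smul]; abel
    rw [dist_eq_norm, hzw]
    calc ‖(1 - t) • (x - p) + t • (y - q)‖
        ≤ ‖(1 - t) • (x - p)‖ + ‖t • (y - q)‖ := norm_add_le _ _
      _ = |1 - t| * ‖x - p‖ + |t| * ‖y - q‖ := by
          rw [norm_smul, norm_smul, Real.norm_eq_abs, Real.norm_eq_abs]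
      _ ≤ 3 * k * M := by
          have h1 : |1 - t| ≤ 1 + |t| := by
            calc |1 - t| ≤ |(1:ℝ)| + |t| := abs_sub _ _
              _ = 1 + |t| := by rw [abs_one]
          have hxp : ‖x - p‖ ≤ M := by rw [← dist_eq_norm]; exact hxM
          have hyq : ‖y - q‖ ≤ M := by rw [← dist_eq_norm]; exact hyM
          have h0p : (0:ℝ) ≤ ‖x - p‖ := norm_nonneg _
          have h0q : (0:ℝ) ≤ ‖y - q‖ := norm_nonneg _
          have h0t : (0:ℝ) ≤ |t| := abs_nonneg _
          nlinarith
  have h0 : 0 ≤ infDist z (F : Set (EuclideanSpace ℝ (Fin d))) := infDist_nonneg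
  have hsq : infDist z (F : Set (EuclideanSpace ℝ (Fin d))) ^ 2 ≤ (3 * k * M) ^ 2 := by
    apply pow_le_pow_left₀ h0 hd
  refine hsq.trans ?_
  have hMsq : M ^ 2 = max (infDist x (F : Set (EuclideanSpace ℝ (Fin d))) ^ 2)
      (infDist y (F : Set (EuclideanSpace ℝ (Fin d))) ^ 2) := by
    rw [hM]
    rcases le_total (infDist x (F : Set (EuclideanSpace ℝ (Fin d))))
      (infDist y (F : Set (EuclideanSpace ℝ (Fin d)))) with h | h
    · rw [max_eq_right h, max_eq_right (pow_le_pow_left₀ infDist_nonneg h 2)]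
    · rw [max_eq_left h, max_eq_left (pow_le_pow_left₀ infDist_nonneg h 2)]
  rw [← hMsq]; ring_nf; nlinarith [sq_nonneg M, sq_nonneg k]
end

section
/- Let F be a linear subspace of ℝ^d, let P be a finite set of points in ℝ^d, let P' be the orthogonal projection of P onto F, and let G be a linear subspace contained in F. Then the fitting cost satisfies cost(P, G) = cost(P, F) + cost(P', G), where cost(S, H) = Σ_{p ∈ S} dist(p, H)². In particular, minimizing cost(P', G) over k-dimensional subspaces G ⊆ F also minimizes cost(P, G) over such subspaces. -/
open Metric Finset

private lemma infDist_eq_norm_sub_proj {d : ℕ}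
    (K : Submodule ℝ (EuclideanSpace ℝ (Fin d))) (x : EuclideanSpace ℝ (Fin d)) :
    infDist x (K : Set (EuclideanSpace ℝ (Fin d))) =
      ‖x - (Submodule.orthogonalProjectionOnto K x : EuclideanSpace ℝ (Fin d))‖ := by
  apply le_antisymm
  · rw [← dist_eq_norm]
    exact infDist_le_dist_of_mem (Submodule.orthogonalProjectionOnto K x).2
  · refine le_of_not_gt fun hlt => ?_
    obtain ⟨y, hy, hdy⟩ := (infDist_lt_iff ⟨0, K.zero_mem⟩).mp hlt
    rw [dist_eq_norm] at hdy
    refine absurd hdy (not_lt.mpr ?_)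
    have h1 : x - (Submodule.orthogonalProjectionOnto K x : EuclideanSpace ℝ (Fin d)) ∈ Kᗮ :=
      Submodule.sub_starProjection_mem_orthogonal x
    have h2 : (Submodule.orthogonalProjectionOnto K x : EuclideanSpace ℝ (Fin d)) - y ∈ K :=
      K.sub_mem (Submodule.orthogonalProjectionOnto K x).2 hy
    have hsplit : x - y = (x - (Submodule.orthogonalProjectionOnto K x : EuclideanSpace ℝ (Fin d)))
        + ((Submodule.orthogonalProjectionOnto K x : EuclideanSpace ℝ (Fin d)) - y) := by abel
    have hpyth := norm_add_sq_eq_norm_sq_add_norm_sq_of_inner_eq_zero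
      (x - (Submodule.orthogonalProjectionOnto K x : EuclideanSpace ℝ (Fin d)))
      ((Submodule.orthogonalProjectionOnto K x : EuclideanSpace ℝ (Fin d)) - y)
      ((Submodule.mem_orthogonal' K _).mp h1 _ h2)
    rw [hsplit]
    nlinarith [norm_nonneg ((Submodule.orthogonalProjectionOnto K x : EuclideanSpace ℝ (Fin d)) - y),
      norm_nonneg (x - (Submodule.orthogonalProjectionOnto K x : EuclideanSpace ℝ (Fin d))),
      norm_nonneg ((x - (Submodule.orthogonalProjectionOnto K x : EuclideanSpace ℝ (Fin d)))
        + ((Submodule.orthogonalProjectionOnto K x : EuclideanSpace ℝ (Fin d)) - y))]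

private lemma infDist_sq_split {d : ℕ}
    (F G : Submodule ℝ (EuclideanSpace ℝ (Fin d))) (hGF : G ≤ F)
    (p : EuclideanSpace ℝ (Fin d)) :
    infDist p (G : Set (EuclideanSpace ℝ (Fin d))) ^ 2 =
      infDist p (F : Set (EuclideanSpace ℝ (Fin d))) ^ 2 +
        infDist ((Submodule.orthogonalProjectionOnto F p : EuclideanSpace ℝ (Fin d)))
          (G : Set (EuclideanSpace ℝ (Fin d))) ^ 2 := by
  rw [infDist_eq_norm_sub_proj, infDist_eq_norm_sub_proj, infDist_eq_norm_sub_proj]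
  set q : EuclideanSpace ℝ (Fin d) := (Submodule.orthogonalProjectionOnto F p : EuclideanSpace ℝ (Fin d)) with hq
  have hproj : (Submodule.orthogonalProjectionOnto G q : EuclideanSpace ℝ (Fin d)) =
      (Submodule.orthogonalProjectionOnto G p : EuclideanSpace ℝ (Fin d)) := by
    exact congrArg (Subtype.val) (Submodule.orthogonalProjectionOnto_starProjection_of_le hGF p)
  have h1 : p - q ∈ Fᗮ := Submodule.sub_starProjection_mem_orthogonal p
  have h2 : q - (Submodule.orthogonalProjectionOnto G q : EuclideanSpace ℝ (Fin d)) ∈ F := by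
    exact F.sub_mem (Submodule.orthogonalProjectionOnto F p).2 (hGF (Submodule.orthogonalProjectionOnto G q).2)
  have hsplit : p - (Submodule.orthogonalProjectionOnto G p : EuclideanSpace ℝ (Fin d)) =
      (p - q) + (q - (Submodule.orthogonalProjectionOnto G q : EuclideanSpace ℝ (Fin d))) := by
    rw [hproj]; abel
  rw [hsplit]
  have := norm_add_sq_eq_norm_sq_add_norm_sq_of_inner_eq_zero (p - q)
    (q - (Submodule.orthogonalProjectionOnto G q : EuclideanSpace ℝ (Fin d)))
    ((Submodule.mem_orthogonal' F _).mp h1 _ h2)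
  simpa [sq] using this

theorem cost_split_along_subspace {d k : ℕ}
    (F : Submodule ℝ (EuclideanSpace ℝ (Fin d)))
    (P : Finset (EuclideanSpace ℝ (Fin d)))
    (G : Submodule ℝ (EuclideanSpace ℝ (Fin d))) (hGF : G ≤ F) :
    (∑ p ∈ P, infDist p (G : Set (EuclideanSpace ℝ (Fin d))) ^ 2 =
      ∑ p ∈ P, infDist p (F : Set (EuclideanSpace ℝ (Fin d))) ^ 2 +
        ∑ p ∈ P, infDist ((Submodule.orthogonalProjectionOnto F p : EuclideanSpace ℝ (Fin d)))
          (G : Set (EuclideanSpace ℝ (Fin d))) ^ 2) ∧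
    ((Module.finrank ℝ G = k →
      (∀ H : Submodule ℝ (EuclideanSpace ℝ (Fin d)), H ≤ F → Module.finrank ℝ H = k →
        ∑ p ∈ P, infDist ((Submodule.orthogonalProjectionOnto F p : EuclideanSpace ℝ (Fin d)))
            (G : Set (EuclideanSpace ℝ (Fin d))) ^ 2 ≤
          ∑ p ∈ P, infDist ((Submodule.orthogonalProjectionOnto F p : EuclideanSpace ℝ (Fin d)))
            (H : Set (EuclideanSpace ℝ (Fin d))) ^ 2) →
      (∀ H : Submodule ℝ (EuclideanSpace ℝ (Fin d)), H ≤ F → Module.finrank ℝ H = k →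
        ∑ p ∈ P, infDist p (G : Set (EuclideanSpace ℝ (Fin d))) ^ 2 ≤
          ∑ p ∈ P, infDist p (H : Set (EuclideanSpace ℝ (Fin d))) ^ 2))) := by
  have key : ∀ (K : Submodule ℝ (EuclideanSpace ℝ (Fin d))), K ≤ F →
      ∑ p ∈ P, infDist p (K : Set (EuclideanSpace ℝ (Fin d))) ^ 2 =
      ∑ p ∈ P, infDist p (F : Set (EuclideanSpace ℝ (Fin d))) ^ 2 +
        ∑ p ∈ P, infDist ((Submodule.orthogonalProjectionOnto F p : EuclideanSpace ℝ (Fin d)))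
          (K : Set (EuclideanSpace ℝ (Fin d))) ^ 2 := by
    intro K hK
    rw [← Finset.sum_add_distrib]
    exact Finset.sum_congr rfl fun p _ => infDist_sq_split F K hK p
  refine ⟨key G hGF, fun _ hmin H hHF hHk => ?_⟩
  rw [key G hGF, key H hHF]
  exact add_le_add_right (hmin H hHF hHk) _
end

section
/- Let P be a finite set of n points in ℝ^d, let F be a linear subspace of ℝ^d, and suppose cost(P, F) ≤ c · opt_k(P) for some constant c ≥ 1, where opt_k(P) is the minimum of cost(P, H) over all k-dimensional linear subspaces H. Then there exists a k-dimensional linear subspace G contained in F with cost(P, G) ≤ 5c · opt_k(P). -/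
open Metric Finset

lemma exists_rank_between {d : ℕ} (k : ℕ) :
    ∀ (n : ℕ) (W F : Submodule ℝ (EuclideanSpace ℝ (Fin d))), W ≤ F →
    Module.finrank ℝ W + n = k → k ≤ Module.finrank ℝ F →
    ∃ G, W ≤ G ∧ G ≤ F ∧ Module.finrank ℝ G = k := by
  intro n
  induction n with
  | zero => exact fun W F hWF h _ => ⟨W, le_rfl, hWF, by simpa using h⟩
  | succ n ih =>
    intro W F hWF h hk
    have hne : W ≠ F := by rintro rfl; omega
    obtain ⟨x, hxF, hxW⟩ := SetLike.exists_of_lt (lt_of_le_of_ne hWF hne)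
    have hx0 : x ≠ 0 := fun h0 => hxW (h0 ▸ W.zero_mem)
    have hinf : W ⊓ (ℝ ∙ x) = ⊥ := by
      rw [eq_bot_iff]
      rintro y hy
      obtain ⟨hyW, hy⟩ := Submodule.mem_inf.1 hy
      rw [Submodule.mem_span_singleton] at hy
      obtain ⟨c, rfl⟩ := hy
      rcases eq_or_ne c 0 with rfl | hc
      · simp
      · exact absurd (by simpa [smul_smul, inv_mul_cancel₀ hc] using W.smul_mem c⁻¹ hyW) hxW
    have hr : Module.finrank ℝ ↥(W ⊔ (ℝ ∙ x)) = Module.finrank ℝ W + 1 := by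
      have h2 := Submodule.finrank_sup_add_finrank_inf_eq W (ℝ ∙ x)
      rw [hinf, finrank_span_singleton hx0, finrank_bot] at h2
      omega
    obtain ⟨G, hG1, hG2, hG3⟩ := ih (W ⊔ (ℝ ∙ x)) F
      (sup_le hWF ((Submodule.span_singleton_le_iff_mem x F).2 hxF)) (by omega) hk
    exact ⟨G, le_trans le_sup_left hG1, hG2, hG3⟩

theorem exists_good_k_flat_inside {d k : ℕ} (hkd : k ≤ d)
    (P : Finset (EuclideanSpace ℝ (Fin d)))
    (F : Submodule ℝ (EuclideanSpace ℝ (Fin d)))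
    (hF : k ≤ Module.finrank ℝ F)
    (opt : ℝ)
    (hopt : IsLeast {x : ℝ | ∃ H : Submodule ℝ (EuclideanSpace ℝ (Fin d)),
      Module.finrank ℝ H = k ∧
        x = ∑ p ∈ P, infDist p (H : Set (EuclideanSpace ℝ (Fin d))) ^ 2} opt)
    (c : ℝ) (hc : 1 ≤ c)
    (hcost : ∑ p ∈ P, infDist p (F : Set (EuclideanSpace ℝ (Fin d))) ^ 2 ≤ c * opt) :
    ∃ G : Submodule ℝ (EuclideanSpace ℝ (Fin d)), G ≤ F ∧ Module.finrank ℝ G = k ∧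
      ∑ p ∈ P, infDist p (G : Set (EuclideanSpace ℝ (Fin d))) ^ 2 ≤ 5 * c * opt := by
  classical
  obtain ⟨H, hHk, hopt_eq⟩ := hopt.1
  -- project H onto F
  let f : EuclideanSpace ℝ (Fin d) →ₗ[ℝ] EuclideanSpace ℝ (Fin d) := F.subtype ∘ₗ (F.orthogonalProjectionOnto).toLinearMap
  let W : Submodule ℝ (EuclideanSpace ℝ (Fin d)) := H.map f
  have hWF : W ≤ F := by
    rintro _ ⟨y, hy, rfl⟩
    exact (F.orthogonalProjectionOnto y).2
  have hWk : Module.finrank ℝ W ≤ k := hHk ▸ Submodule.finrank_map_le f H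
  obtain ⟨G, hWG, hGF, hGk⟩ :=
    exists_rank_between k (k - Module.finrank ℝ W) W F hWF (by omega) hF
  refine ⟨G, hGF, hGk, ?_⟩
  have key : ∀ p : EuclideanSpace ℝ (Fin d), infDist p (G : Set (EuclideanSpace ℝ (Fin d))) ≤ infDist p (F : Set (EuclideanSpace ℝ (Fin d))) + infDist p (H : Set (EuclideanSpace ℝ (Fin d))) := by
    intro p
    obtain ⟨h, hhH, hdist⟩ := (Submodule.closed_of_finiteDimensional H).exists_infDist_eq_dist
      ⟨0, H.zero_mem⟩ p
    have h1 : infDist p (G : Set (EuclideanSpace ℝ (Fin d))) ≤ dist p ((F.orthogonalProjectionOnto h : EuclideanSpace ℝ (Fin d))) :=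
      infDist_le_dist_of_mem (hWG ⟨h, hhH, rfl⟩)
    have h3 : dist ((F.orthogonalProjectionOnto p : EuclideanSpace ℝ (Fin d))) ((F.orthogonalProjectionOnto h : EuclideanSpace ℝ (Fin d)))
        ≤ dist p h := by
      rw [dist_eq_norm, dist_eq_norm]
      have heq : (F.orthogonalProjectionOnto p : EuclideanSpace ℝ (Fin d)) - (F.orthogonalProjectionOnto h : EuclideanSpace ℝ (Fin d))
          = ((F.orthogonalProjectionOnto (p - h) : F) : EuclideanSpace ℝ (Fin d)) := by
        rw [map_sub]; rfl
      rw [heq]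
      calc ‖((F.orthogonalProjectionOnto (p - h) : F) : EuclideanSpace ℝ (Fin d))‖
          = ‖F.orthogonalProjectionOnto (p - h)‖ := rfl
        _ ≤ ‖F.orthogonalProjectionOnto‖ * ‖p - h‖ := (F.orthogonalProjectionOnto).le_opNorm _
        _ ≤ 1 * ‖p - h‖ :=
            mul_le_mul_of_nonneg_right (Submodule.orthogonalProjectionOnto_norm_le F) (norm_nonneg _)
        _ = ‖p - h‖ := one_mul _
    have h4 : dist p ((F.orthogonalProjectionOnto p : EuclideanSpace ℝ (Fin d))) ≤ infDist p (F : Set (EuclideanSpace ℝ (Fin d))) := by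
      obtain ⟨y, hyF, hy⟩ := (Submodule.closed_of_finiteDimensional F).exists_infDist_eq_dist
        ⟨0, F.zero_mem⟩ p
      rw [hy, dist_eq_norm, dist_eq_norm]
      calc ‖p - (F.orthogonalProjectionOnto p : EuclideanSpace ℝ (Fin d))‖ = ⨅ x : F, ‖p - x‖ :=
            by rw [← Submodule.starProjection_apply]; exact Submodule.starProjection_minimal p
        _ ≤ ‖p - (⟨y, hyF⟩ : F)‖ :=
            ciInf_le ⟨0, by rintro _ ⟨x, rfl⟩; exact norm_nonneg _⟩ (⟨y, hyF⟩ : F)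
        _ = ‖p - y‖ := rfl
    have h2 := dist_triangle p ((F.orthogonalProjectionOnto p : EuclideanSpace ℝ (Fin d))) ((F.orthogonalProjectionOnto h : EuclideanSpace ℝ (Fin d)))
    rw [hdist]
    linarith
  have hsq : ∀ p ∈ P, infDist p (G : Set (EuclideanSpace ℝ (Fin d))) ^ 2
      ≤ 2 * infDist p (F : Set (EuclideanSpace ℝ (Fin d))) ^ 2 + 2 * infDist p (H : Set (EuclideanSpace ℝ (Fin d))) ^ 2 := by
    intro p _
    have h0 : (0:ℝ) ≤ infDist p (G : Set (EuclideanSpace ℝ (Fin d))) := infDist_nonneg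
    have h5 : infDist p (G : Set (EuclideanSpace ℝ (Fin d))) ^ 2
        ≤ (infDist p (F : Set (EuclideanSpace ℝ (Fin d)))
          + infDist p (H : Set (EuclideanSpace ℝ (Fin d)))) ^ 2 :=
      pow_le_pow_left₀ h0 (key p) 2
    nlinarith [sq_nonneg (infDist p (F : Set (EuclideanSpace ℝ (Fin d)))
      - infDist p (H : Set (EuclideanSpace ℝ (Fin d))))]
  have hsum : ∑ p ∈ P, infDist p (G : Set (EuclideanSpace ℝ (Fin d))) ^ 2
      ≤ 2 * (∑ p ∈ P, infDist p (F : Set (EuclideanSpace ℝ (Fin d))) ^ 2) + 2 * (∑ p ∈ P, infDist p (H : Set (EuclideanSpace ℝ (Fin d))) ^ 2) := by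
    rw [Finset.mul_sum, Finset.mul_sum, ← Finset.sum_add_distrib]
    exact Finset.sum_le_sum hsq
  have hoptnn : 0 ≤ opt := by
    rw [hopt_eq]
    exact Finset.sum_nonneg fun p _ => by positivity
  have hHopt : ∑ p ∈ P, infDist p (H : Set (EuclideanSpace ℝ (Fin d))) ^ 2 = opt := hopt_eq.symm
  nlinarith [mul_nonneg (sub_nonneg.2 hc) hoptnn]
end

section
/- Let F and F_opt be linear subspaces of ℝ^d, let P be a finite set of points, and let P' be the orthogonal projection of P onto F. Then cost(P', F_opt) ≤ 2(cost(P, F) + cost(P, F_opt)). -/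
open Metric Finset

theorem projected_cost_bound {d : ℕ}
    (F Fopt : Submodule ℝ (EuclideanSpace ℝ (Fin d)))
    (P : Finset (EuclideanSpace ℝ (Fin d))) :
    ∑ p ∈ P, infDist ((Submodule.orthogonalProjectionOnto F p : EuclideanSpace ℝ (Fin d)))
        (Fopt : Set (EuclideanSpace ℝ (Fin d))) ^ 2 ≤
      2 * (∑ p ∈ P, infDist p (F : Set (EuclideanSpace ℝ (Fin d))) ^ 2 +
        ∑ p ∈ P, infDist p (Fopt : Set (EuclideanSpace ℝ (Fin d))) ^ 2) := by
  rw [← Finset.sum_add_distrib, Finset.mul_sum]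
  apply Finset.sum_le_sum
  intro p _
  set p' := (Submodule.orthogonalProjectionOnto F p : EuclideanSpace ℝ (Fin d))
  have hF : infDist p (F : Set (EuclideanSpace ℝ (Fin d))) = dist p p' := by
    apply le_antisymm (infDist_le_dist_of_mem (Submodule.coe_mem _))
    rw [infDist_eq_iInf]
    apply le_ciInf
    intro y
    rw [dist_eq_norm, dist_eq_norm, Submodule.coe_orthogonalProjectionOnto_apply, Submodule.starProjection_minimal]
    exact ciInf_le ⟨0, fun x hx => by rcases hx with ⟨z, rfl⟩; positivity⟩ (⟨y.1, y.2⟩ : F)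
  have h1 : infDist p' (Fopt : Set (EuclideanSpace ℝ (Fin d))) ≤
      infDist p (F : Set (EuclideanSpace ℝ (Fin d))) +
      infDist p (Fopt : Set (EuclideanSpace ℝ (Fin d))) := by
    rw [hF]
    calc infDist p' (Fopt : Set _) ≤ infDist p (Fopt : Set _) + dist p' p :=
          infDist_le_infDist_add_dist
      _ = dist p p' + infDist p (Fopt : Set _) := by rw [dist_comm]; ring
  have h0 : (0:ℝ) ≤ infDist p' (Fopt : Set (EuclideanSpace ℝ (Fin d))) := infDist_nonneg
  nlinarith [infDist_nonneg (x := p) (s := (F : Set (EuclideanSpace ℝ (Fin d)))),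
    infDist_nonneg (x := p) (s := (Fopt : Set (EuclideanSpace ℝ (Fin d)))),
    sq_nonneg (infDist p (F : Set (EuclideanSpace ℝ (Fin d))) -
      infDist p (Fopt : Set (EuclideanSpace ℝ (Fin d))))]
end
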